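/- (Change-of-state lemma.) Fix n and ℓ with 0 ≤ ℓ ≤ n, and let M_n := ∑_{j=0}^n (1/(p_j π_j)) ∑_{k=0}^j r_k π_k. Suppose the transition probabilities at state ℓ are changed to p'_ℓ, q'_ℓ, r'_ℓ with p'_ℓ > 0, r'_ℓ ≥ 0, p'_ℓ + q'_ℓ + r'_ℓ = 1 (and q'_0 = 0), satisfying p'_ℓ ≤ p_ℓ, q'_ℓ ≥ q_ℓ, r'_ℓ ≥ r_ℓ, while all other transition probabilities are unchanged. Let M'_n denote the value of the analogous sum computed with the modified parameters. Then M'_n ≥ M_n. -/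

import Mathlib

open Finset Filter

private lemma key1 (S pl p'l rl r'l c pil : ℝ) (hS : 0 ≤ S) (hpi : 0 < pil)
    (hp : 0 < pl) (hp' : 0 < p'l) (hc : 0 < c) (hc1 : c ≤ 1)
    (hple : p'l ≤ pl) (hrl : 0 ≤ rl) (hrge : rl ≤ r'l) :
    (1 / (pl * pil)) * (S + rl * pil) ≤ (1 / (p'l * (c * pil))) * (S + r'l * (c * pil)) := by
  have e1 : (1 / (pl * pil)) * (S + rl * pil) = S / (pl * pil) + rl / pl := by
    field_simp
  have e2 : (1 / (p'l * (c * pil))) * (S + r'l * (c * pil))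
      = S / (p'l * (c * pil)) + r'l / p'l := by
    field_simp
  rw [e1, e2]
  have h1 : S / (pl * pil) ≤ S / (p'l * (c * pil)) := by
    apply div_le_div_of_nonneg_left hS (by positivity)
    calc p'l * (c * pil) ≤ pl * (1 * pil) := by
          apply mul_le_mul hple (by nlinarith) (by positivity) hp.le
      _ = pl * pil := by ring
  have h2 : rl / pl ≤ r'l / p'l := by
    apply div_le_div₀ (by linarith) hrge hp' hple
  linarith

private lemma key2 (S T pj rl r'l a c pil pij : ℝ) (hS : 0 ≤ S) (hT : 0 ≤ T)
    (hpi : 0 < pil) (hpij : 0 < pij) (hpj : 0 < pj)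
    (ha : 0 < a) (ha1 : a ≤ 1) (hc : 0 < c) (hc1 : c ≤ 1)
    (hrl : 0 ≤ rl) (hrge : rl ≤ r'l) :
    (1 / (pj * pij)) * (S + rl * pil + T)
      ≤ (1 / (pj * (a * c * pij))) * (S + r'l * (c * pil) + a * c * T) := by
  have e2 : (1 / (pj * (a * c * pij))) * (S + r'l * (c * pil) + a * c * T)
      = (1 / (pj * pij)) * (S / (a * c) + r'l * pil / a + T) := by
    field_simp
  rw [e2]
  apply mul_le_mul_of_nonneg_left _ (by positivity)
  have hac1 : a * c ≤ 1 := by nlinarith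
  have h1 : S ≤ S / (a * c) := by
    rw [le_div_iff₀ (by positivity)]
    nlinarith [mul_nonneg hS (sub_nonneg.mpr hac1)]
  have h2 : rl * pil ≤ r'l * pil / a := by
    rw [le_div_iff₀ ha]
    nlinarith [mul_nonneg (mul_nonneg hrl hpi.le) (sub_nonneg.mpr ha1),
      mul_nonneg (sub_nonneg.mpr hrge) hpi.le]
  linarith

theorem stmt16 (p q r p' q' r' : ℕ → ℝ)
    (hp : ∀ j, 0 < p j) (hq : ∀ j, 0 < q (j + 1)) (hr : ∀ j, 0 ≤ r j)
    (hq0 : q 0 = 0) (hs : ∀ j, p j + q j + r j = 1)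
    (π : ℕ → ℝ) (hπ0 : π 0 = 1) (hπ : ∀ n, π (n + 1) = π n * (p n / q (n + 1)))
    (π' : ℕ → ℝ) (hπ'0 : π' 0 = 1) (hπ' : ∀ n, π' (n + 1) = π' n * (p' n / q' (n + 1)))
    (n ℓ : ℕ) (hℓ : ℓ ≤ n)
    (hsame : ∀ j, j ≠ ℓ → p' j = p j ∧ q' j = q j ∧ r' j = r j)
    (hq'0 : q' 0 = 0)
    (hp'pos : 0 < p' ℓ) (hr'pos : 0 ≤ r' ℓ) (hs' : p' ℓ + q' ℓ + r' ℓ = 1)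
    (hple : p' ℓ ≤ p ℓ) (hqge : q' ℓ ≥ q ℓ) (hrge : r' ℓ ≥ r ℓ) :
    ∑ j ∈ Finset.range (n + 1), (1 / (p' j * π' j)) *
        ∑ k ∈ Finset.range (j + 1), r' k * π' k ≥
      ∑ j ∈ Finset.range (n + 1), (1 / (p j * π j)) *
        ∑ k ∈ Finset.range (j + 1), r k * π k := by
  have hπpos : ∀ j, 0 < π j := by
    intro j
    induction j with
    | zero => simp [hπ0]
    | succ m ih => rw [hπ m]; exact mul_pos ih (div_pos (hp m) (hq m))
  have hp'p : ∀ j, 0 < p' j := by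
    intro j
    by_cases h : j = ℓ
    · subst h; exact hp'pos
    · rw [(hsame j h).1]; exact hp j
  have hq'p : ∀ j, 0 < q' (j + 1) := by
    intro j
    by_cases h : j + 1 = ℓ
    · rw [h]; calc (0:ℝ) < q (j+1) := hq j
        _ = q ℓ := by rw [h]
        _ ≤ q' ℓ := hqge
    · rw [(hsame (j+1) h).2.1]; exact hq j
  have hπ'pos : ∀ j, 0 < π' j := by
    intro j
    induction j with
    | zero => simp [hπ'0]
    | succ m ih => rw [hπ' m]; exact mul_pos ih (div_pos (hp'p m) (hq'p m))
  have hr'nn : ∀ j, 0 ≤ r' j := by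
    intro j
    by_cases h : j = ℓ
    · subst h; exact hr'pos
    · rw [(hsame j h).2.2]; exact hr j
  -- π' = π below ℓ
  have hA : ∀ j, j < ℓ → π' j = π j := by
    intro j hj
    induction j with
    | zero => rw [hπ'0, hπ0]
    | succ m ih =>
      rw [hπ' m, hπ m, ih (by omega), (hsame m (by omega)).1,
        (hsame (m+1) (by omega)).2.1]
  set a : ℝ := p' ℓ / p ℓ with ha_def
  set c : ℝ := π' ℓ / π ℓ with hc_def
  have hapos : 0 < a := div_pos hp'pos (hp ℓ)
  have ha1 : a ≤ 1 := (div_le_one (hp ℓ)).mpr hple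
  have hcpos : 0 < c := div_pos (hπ'pos ℓ) (hπpos ℓ)
  have hπ'ℓ : π' ℓ = c * π ℓ := by
    rw [hc_def, div_mul_eq_mul_div, mul_div_assoc, div_self (ne_of_gt (hπpos ℓ)), mul_one]
  have hc1 : c ≤ 1 := by
    rw [hc_def, div_le_one (hπpos ℓ)]
    match ℓ, hqge with
    | 0, _ => rw [hπ'0, hπ0]
    | (m+1), hqge =>
      rw [hπ' m, hπ m, hA m (by omega), (hsame m (by omega)).1]
      apply mul_le_mul_of_nonneg_left _ (hπpos m).le
      apply div_le_div_of_nonneg_left (hp m).le (hq m)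
      exact hqge
  -- π' = a*c*π above ℓ
  have hC : ∀ j, ℓ < j → π' j = a * c * π j := by
    intro j hj
    induction j with
    | zero => omega
    | succ m ih =>
      rcases Nat.lt_or_ge ℓ m with h | h
      · rw [hπ' m, hπ m, ih h, (hsame m (by omega)).1, (hsame (m+1) (by omega)).2.1]
        ring
      · have hm : m = ℓ := by omega
        subst hm
        rw [hπ' m, hπ m, hπ'ℓ, (hsame (m+1) (by omega)).2.1, ha_def]
        field_simp [ne_of_gt (hp m), ne_of_gt (hπpos m), ne_of_gt (hq m)]
  apply Finset.sum_le_sum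
  intro j hj
  rcases lt_trichotomy j ℓ with h | h | h
  · -- j < ℓ : terms equal
    have : ∀ k ∈ Finset.range (j+1), r' k * π' k = r k * π k := by
      intro k hk
      simp only [Finset.mem_range] at hk
      rw [(hsame k (by omega)).2.2, hA k (by omega)]
    rw [Finset.sum_congr rfl this, (hsame j (by omega)).1, hA j h]
  · subst h
    have hsum : ∀ k ∈ Finset.range j, r' k * π' k = r k * π k := by
      intro k hk
      simp only [Finset.mem_range] at hk
      rw [(hsame k (by omega)).2.2, hA k hk]
    rw [Finset.sum_range_succ, Finset.sum_range_succ, Finset.sum_congr rfl hsum,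
      hπ'ℓ]
    exact key1 _ _ _ _ _ _ _
      (Finset.sum_nonneg fun k _ => mul_nonneg (hr k) (hπpos k).le)
      (hπpos j) (hp j) hp'pos hcpos hc1 hple (hr j) hrge
  · -- ℓ < j
    have hsplit : ∀ (f : ℕ → ℝ), ∑ k ∈ Finset.range (j+1), f k
        = (∑ k ∈ Finset.range (ℓ+1), f k) + ∑ k ∈ Finset.Ico (ℓ+1) (j+1), f k := by
      intro f
      simp only [Finset.range_eq_Ico]
      exact (Finset.sum_Ico_consecutive f (Nat.zero_le (ℓ+1)) (by omega : ℓ+1 ≤ j+1)).symm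
    rw [hsplit (fun k => r' k * π' k), hsplit (fun k => r k * π k)]
    have hsum1 : ∀ k ∈ Finset.range ℓ, r' k * π' k = r k * π k := by
      intro k hk
      simp only [Finset.mem_range] at hk
      rw [(hsame k (by omega)).2.2, hA k hk]
    have hsum2 : ∀ k ∈ Finset.Ico (ℓ+1) (j+1), r' k * π' k = a * c * (r k * π k) := by
      intro k hk
      simp only [Finset.mem_Ico] at hk
      rw [(hsame k (by omega)).2.2, hC k (by omega)]
      ring
    rw [Finset.sum_range_succ, Finset.sum_range_succ, Finset.sum_congr rfl hsum1,
      Finset.sum_congr rfl hsum2, ← Finset.mul_sum, hπ'ℓ, hC j h, (hsame j (by omega)).1]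
    exact key2 _ _ _ _ _ _ _ _ _
      (Finset.sum_nonneg fun k _ => mul_nonneg (hr k) (hπpos k).le)
      (Finset.sum_nonneg fun k _ => mul_nonneg (hr k) (hπpos k).le)
      (hπpos ℓ) (hπpos j) (hp j) hapos ha1 hcpos hc1 (hr ℓ) hrge
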